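/- Let M be a conical refinement monoid. Then Fin(M), the set of elements of finite index, is cancellative: for all a, b ∈ M and c ∈ Fin(M), a + c = b + c implies a = b. -/
import Mathlib


/-- The refinement property for a commutative monoid. -/
def HasRefinement (M : Type*) [AddCommMonoid M] : Prop :=
  ∀ a₀ a₁ b₀ b₁ : M, a₀ + a₁ = b₀ + b₁ →
    ∃ c₀₀ c₀₁ c₁₀ c₁₁ : M,
      a₀ = c₀₀ + c₀₁ ∧ a₁ = c₁₀ + c₁₁ ∧ b₀ = c₀₀ + c₁₀ ∧ b₁ = c₀₁ + c₁₁

/-- A commutative monoid is conical if `x + y = 0` implies `x = y = 0`. -/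
def Conical (M : Type*) [AddCommMonoid M] : Prop :=
  ∀ x y : M, x + y = 0 → x = 0 ∧ y = 0

/-- The algebraic preordering on a commutative monoid: `x ≤ y` iff `∃ z, x + z = y`. -/
def algLE {M : Type*} [AddCommMonoid M] (x y : M) : Prop := ∃ z, x + z = y

/-- The index of an element `x`: the supremum in `ℕ∞` of all `n` such that `n • y ≤ x`
for some nonzero `y`. -/
noncomputable def indexM {M : Type*} [AddCommMonoid M] (x : M) : ℕ∞ :=
  sSup ((fun n : ℕ => (n : ℕ∞)) '' {n : ℕ | ∃ y : M, y ≠ 0 ∧ algLE (n • y) x})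

theorem stmt9 {M : Type*} [AddCommMonoid M]
    (hc : Conical M) (hr : HasRefinement M) :
    ∀ a b c : M, indexM c < ⊤ → a + c = b + c → a = b := by
  intro a b c hfin heq
  -- Extract a natural number bound `N` on the index set from `indexM c < ⊤`.
  obtain ⟨N, hNeq⟩ : ∃ N : ℕ, indexM c = (N : ℕ∞) := by
    lift indexM c to ℕ using hfin.ne with N
    exact ⟨N, rfl⟩
  have hbound : ∀ n : ℕ, (∃ y : M, y ≠ 0 ∧ algLE (n • y) c) → n ≤ N := by
    intro n hn
    have h1 : (n : ℕ∞) ≤ indexM c := le_sSup ⟨n, hn, rfl⟩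
    rw [hNeq] at h1
    exact_mod_cast h1
  -- Key lemma, by induction on the remaining number of steps `j`.
  have key : ∀ j m : ℕ, N + 1 ≤ m + j → ∀ y z v : M, y + v = z + v →
      algLE (m • y + v) c → algLE (m • z + v) c → y = z := by
    intro j
    induction j with
    | zero =>
      intro m hm y z v hyz hy hz
      -- here m ≥ N + 1, so y must be 0 (else index would exceed N), and then z = 0 too.
      have hy0 : y = 0 := by
        by_contra hy0
        have hle : algLE (m • y) c := by
          obtain ⟨r, hrr⟩ := hy
          exact ⟨v + r, by rw [← add_assoc]; exact hrr⟩
        have := hbound m ⟨y, hy0, hle⟩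
        omega
      subst hy0
      rw [zero_add] at hyz
      -- hyz : v = z + v
      have hvc : algLE v c := by
        obtain ⟨r, hrr⟩ := hy
        exact ⟨r, by simpa using hrr⟩
      by_contra hz0
      have habs : ∀ n : ℕ, n • z + v = v := by
        intro n
        induction n with
        | zero => simp
        | succ k ih =>
          rw [succ_nsmul, add_assoc, ← hyz]; exact ih
      have hle : algLE ((N + 1) • z) c := by
        obtain ⟨r, hrr⟩ := hvc
        exact ⟨v + r, by rw [← add_assoc, habs (N + 1)]; exact hrr⟩
      have := hbound (N + 1) ⟨z, fun h => hz0 h.symm, hle⟩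
      omega
    | succ j ih =>
      intro m hm y z v hyz hy hz
      -- Refine y + v = z + v to split off a common piece s.
      obtain ⟨s, t, u, v', h1, h2, h3, h4⟩ := hr y v z v hyz
      -- y = s + t, v = u + v', z = s + u, v = t + v'
      have hveq : t + v' = u + v' := by rw [← h4, ← h2]
      have hty : m • y + v = m • s + ((m + 1) • t + v') := by
        rw [h1, h4, smul_add, succ_nsmul]
        abel
      have htz : m • z + v = m • s + ((m + 1) • u + v') := by
        rw [h3, h2, smul_add, succ_nsmul]
        abel
      have htu : t = u := by
        apply ih (m + 1) (by omega) t u v' hveq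
        · obtain ⟨r, hrr⟩ := hy
          exact ⟨r + m • s, by rw [← hrr, hty]; abel⟩
        · obtain ⟨r, hrr⟩ := hz
          exact ⟨r + m • s, by rw [← hrr, htz]; abel⟩
      rw [h1, h3, htu]
  -- Refine a + c = b + c.
  obtain ⟨d, y, z, w, h1, h2, h3, h4⟩ := hr a c b c heq
  -- a = d + y, c = z + w, b = d + z, c = y + w
  have hyz : y + w = z + w := by rw [← h4, ← h2]
  have hy : algLE (1 • y + w) c := ⟨0, by rw [one_smul, add_zero]; exact h4.symm⟩
  have hz : algLE (1 • z + w) c := ⟨0, by rw [one_smul, add_zero]; exact h2.symm⟩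
  have := key N 1 (by omega) y z w hyz hy hz
  rw [h1, h3, this]
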